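/- Let E = (E⁰, E¹, d, r) be a directed graph with maps n : E¹ → ℤ₊ and m : E¹ → ℤ, and let p(·) be the contraction number of paths (defined recursively as: p(e) = 1 if m(e) = 0, else n(e)/gcd(n(e),|m(e)|); and p((e,ν)) = 1 if m(e) = 0, else n(e)p(ν)/gcd(n(e)p(ν),|m(e)|)). For a path μ = (e₁,…,e_k), define 𝕋_μ = { (z₁,…,z_k) ∈ 𝕋^k : z_i^{n(e_i)} = z_{i+1}^{m(e_{i+1})} for 1 ≤ i ≤ k−1 }, d_μ(z) = z_k^{n(e_k)} and r_μ(z) = z_1^{m(e₁)}. Then for every z₀ ∈ 𝕋 there exists z_k ∈ 𝕋 such that r_μ(d_μ^{-1}(z₀)) = { z_k e^{2πij/p(μ)} : j = 0, 1, …, p(μ)−1 }. -/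

import Mathlib

open Real

/-- The contraction number `p(μ)` of a path, defined recursively. -/
def contractionNum {E : Type*} (n : E → ℕ) (m : E → ℤ) : List E → ℕ
  | [] => 1
  | e :: ν =>
    if m e = 0 then 1
    else (n e * contractionNum n m ν) / Nat.gcd (n e * contractionNum n m ν) (m e).natAbs

namespace Stmt6Aux

lemma exp_nat_mul (k : ℕ) (x : ℝ) : Circle.exp (k * x) = Circle.exp x ^ k := by
  induction k with
  | zero => simp
  | succ k ih => push_cast; rw [add_mul, one_mul, Circle.exp_add, ih, pow_succ]

lemma exp_int_mul (k : ℤ) (x : ℝ) : Circle.exp (k * x) = Circle.exp x ^ k := by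
  cases k with
  | ofNat k => simpa using exp_nat_mul k x
  | negSucc k =>
    have h : ((Int.negSucc k : ℤ) : ℝ) * x = -(((k + 1 : ℕ) : ℝ) * x) := by push_cast; ring
    rw [h, Circle.exp_neg, exp_nat_mul, zpow_negSucc]

lemma exists_root (N : ℕ) (hN : N ≠ 0) (c : Circle) : ∃ u : Circle, u ^ N = c := by
  refine ⟨Circle.exp (Complex.arg c / N), ?_⟩
  rw [← exp_nat_mul, mul_div_cancel₀ _ (by exact_mod_cast hN : (N : ℝ) ≠ 0)]
  exact Circle.exp_arg c

/-- coset of `P`-th roots of unity based at `u` -/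
def C (u : Circle) (P : ℕ) : Set Circle := {w | (u⁻¹ * w) ^ P = 1}

lemma preimage_pow (N P : ℕ) (w v : Circle) (hv : v ^ N = w) :
    {z : Circle | z ^ N ∈ C w P} = C v (N * P) := by
  ext z
  have h : w⁻¹ * z ^ N = (v⁻¹ * z) ^ N := by rw [← hv, mul_pow, inv_pow]
  simp only [C, Set.mem_setOf_eq, h, ← pow_mul]

lemma C_eq_exp (zk : Circle) (P : ℕ) (hP : P ≠ 0) :
    C zk P = {w : Circle | ∃ j : ℕ, j < P ∧ w = zk * Circle.exp (2 * π * j / P)} := by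
  have hP' : (P : ℝ) ≠ 0 := by exact_mod_cast hP
  ext w
  simp only [C, Set.mem_setOf_eq]
  constructor
  · intro hw
    set θ := Complex.arg (zk⁻¹ * w : Circle) with hθ
    have hexp : Circle.exp θ = zk⁻¹ * w := Circle.exp_arg _
    have h1 : Circle.exp ((P : ℝ) * θ) = 1 := by rw [exp_nat_mul, hexp, hw]
    obtain ⟨k, hk⟩ := Circle.exp_eq_one.1 h1
    have hnn : 0 ≤ k % (P : ℤ) := Int.emod_nonneg k (by exact_mod_cast hP)
    refine ⟨(k % P).toNat, ?_, ?_⟩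
    · have h2 : k % (P : ℤ) < P := Int.emod_lt_of_pos k (by exact_mod_cast hP.bot_lt)
      omega
    · have hc0 : (((k % (P:ℤ)).toNat : ℕ) : ℝ) = (k : ℝ) - (P : ℝ) * ((k / (P:ℤ) : ℤ) : ℝ) := by
        have hdm := Int.mul_ediv_add_emod k (P:ℤ)
        have h1' : ((k % (P:ℤ)).toNat : ℤ) = k - P * (k / P) := by omega
        exact_mod_cast h1'
      have hθe : θ = (k : ℝ) * (2 * π) / P := by
        rw [eq_div_iff hP']
        linear_combination hk
      have hθval : θ = 2 * π * (((k % (P:ℤ)).toNat : ℕ) : ℝ) / P + ((k / (P:ℤ) : ℤ) : ℝ) * (2 * π) := by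
        rw [hθe, hc0]; field_simp; ring
      have hsame : Circle.exp (2 * π * (((k % (P:ℤ)).toNat : ℕ) : ℝ) / P) = zk⁻¹ * w := by
        rw [← hexp, hθval, Circle.exp_add]
        rw [Circle.exp_int_mul_two_pi, mul_one]
      rw [hsame]
      exact (mul_inv_cancel_left zk w).symm
  · rintro ⟨j, hj, rfl⟩
    have h : (zk⁻¹ * (zk * Circle.exp (2 * π * j / P))) = Circle.exp (2 * π * j / P) := by
      group
    rw [h, ← exp_nat_mul]
    have h2 : (P : ℝ) * (2 * π * j / P) = ((j : ℤ) : ℝ) * (2 * π) := by push_cast; field_simp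
    rw [h2, Circle.exp_int_mul_two_pi]

lemma image_pow_C (u : Circle) (N : ℕ) (hN : N ≠ 0) (mm : ℤ) :
    (fun z : Circle => z ^ mm) '' C u N
      = C (u ^ mm) (if mm = 0 then 1 else N / Nat.gcd N mm.natAbs) := by
  rcases eq_or_ne mm 0 with rfl | hm
  · rw [if_pos rfl]
    ext t
    simp only [C, Set.mem_setOf_eq, Set.mem_image, zpow_zero, pow_one, inv_one, one_mul]
    constructor
    · rintro ⟨z, hz, rfl⟩; rfl
    · intro ht; exact ⟨u, by simp, ht.symm⟩
  · rw [if_neg hm]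
    set g : ℕ := Nat.gcd N mm.natAbs with hgdef
    have hgN : g ∣ N := Nat.gcd_dvd_left _ _
    have hgpos : 0 < g := Nat.gcd_pos_of_pos_left _ (Nat.pos_of_ne_zero hN)
    obtain ⟨b, hb⟩ := hgN
    have hbpos : 0 < b := by
      rcases Nat.eq_zero_or_pos b with rfl | h
      · rw [Nat.mul_zero] at hb; exact absurd hb hN
      · exact h
    have hNdg : N / g = b := by rw [hb, Nat.mul_div_cancel_left b hgpos]
    have hgm : (g : ℤ) ∣ mm := by
      have h := Nat.gcd_dvd_right N mm.natAbs
      exact Int.natAbs_dvd_natAbs.mp (by simpa using h)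
    obtain ⟨a, ha⟩ := hgm
    rw [hNdg]
    have hNR : (N : ℝ) ≠ 0 := by exact_mod_cast hN
    have hbR : (b : ℝ) ≠ 0 := by exact_mod_cast hbpos.ne'
    ext t
    simp only [C, Set.mem_setOf_eq, Set.mem_image]
    constructor
    · rintro ⟨z, hz, rfl⟩
      have hcom : (u ^ mm)⁻¹ * z ^ mm = (u⁻¹ * z) ^ mm := by rw [mul_zpow, inv_zpow]
      rw [hcom, ← zpow_natCast ((u⁻¹ * z) ^ mm) b, ← zpow_mul]
      have hmb : mm * (b : ℤ) = (N : ℤ) * a := by rw [ha, hb]; push_cast; ring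
      rw [hmb, zpow_mul, zpow_natCast, hz, one_zpow]
    · intro ht
      set τ := (u ^ mm)⁻¹ * t with hτ
      obtain ⟨s, hs1, hs2⟩ : ∃ s : Circle, s ^ N = 1 ∧ s ^ mm = τ := by
        set θ := Complex.arg (τ : ℂ) with hθdef
        have hexp : Circle.exp θ = τ := Circle.exp_arg _
        have h1 : Circle.exp ((b : ℝ) * θ) = 1 := by rw [exp_nat_mul, hexp, ht]
        obtain ⟨k, hk⟩ := Circle.exp_eq_one.1 h1
        set A := Int.gcdA (N : ℤ) mm with hA
        set B := Int.gcdB (N : ℤ) mm with hB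
        have hbez : (g : ℤ) = (N : ℤ) * A + mm * B := by
          have h := Int.gcd_eq_gcd_ab (N : ℤ) mm
          have hgg : Int.gcd (N : ℤ) mm = g := by simp [Int.gcd, hgdef]
          rw [hgg] at h; exact h
        refine ⟨Circle.exp (2 * π * ((B * k : ℤ) : ℝ) / N), ?_, ?_⟩
        · rw [← exp_nat_mul]
          have h2 : (N : ℝ) * (2 * π * ((B * k : ℤ) : ℝ) / N) = ((B * k : ℤ) : ℝ) * (2 * π) := by
            field_simp
          rw [h2, Circle.exp_int_mul_two_pi]
        · rw [← exp_int_mul]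
          have hbez2 : (mm : ℝ) * (B : ℝ) = (g : ℝ) - (N : ℝ) * (A : ℝ) := by
            have h2 : mm * B = (g : ℤ) - (N : ℤ) * A := by linear_combination (-1 : ℤ) * hbez
            exact_mod_cast h2
          have hgb2 : (g : ℝ) * (b : ℝ) = (N : ℝ) := by exact_mod_cast hb.symm
          have hx : (mm : ℝ) * (2 * π * ((B * k : ℤ) : ℝ) / N)
              = θ + ((-(A * k) : ℤ) : ℝ) * (2 * π) := by
            have hθe : θ = (k : ℝ) * (2 * π) / b := by
              rw [eq_div_iff hbR]; linear_combination hk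
            rw [hθe]
            push_cast
            field_simp
            linear_combination ((k : ℝ) * (b : ℝ)) * hbez2 + (k : ℝ) * hgb2
          rw [hx, Circle.exp_add, Circle.exp_int_mul_two_pi, mul_one, hexp]
      refine ⟨u * s, ?_, ?_⟩
      · show (u⁻¹ * (u * s)) ^ N = 1
        rw [inv_mul_cancel_left, hs1]
      · show (u * s) ^ mm = t
        rw [mul_zpow, hs2, hτ, mul_inv_cancel_left]

lemma cpos {E : Type*} (n : E → ℕ) (m : E → ℤ) (hn : ∀ e, 0 < n e) :
    ∀ μ : List E, 0 < contractionNum n m μ := by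
  intro μ
  induction μ with
  | nil => rw [contractionNum]; norm_num
  | cons e ν ih =>
    rw [contractionNum]
    split
    · norm_num
    · have hq : 0 < n e * contractionNum n m ν := Nat.mul_pos (hn e) ih
      exact Nat.div_pos (Nat.le_of_dvd hq (Nat.gcd_dvd_left _ _)) (Nat.gcd_pos_of_pos_left _ hq)

lemma key {E : Type*} (n : E → ℕ) (m : E → ℤ) (hn : ∀ e, 0 < n e) :
    ∀ (ν : List E) (e : E) (z₀ : Circle) (hμ : (e :: ν : List E) ≠ []),
    ∃ u : Circle,
      (fun z : Fin (e :: ν).length → Circle => z ⟨0, List.length_pos_iff.mpr hμ⟩) ''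
        {z : Fin (e :: ν).length → Circle |
          (∀ (i : ℕ) (h : i + 1 < (e :: ν).length),
            z ⟨i, by omega⟩ ^ n ((e :: ν).get ⟨i, by omega⟩) =
              z ⟨i + 1, h⟩ ^ m ((e :: ν).get ⟨i + 1, h⟩)) ∧
          z ⟨(e :: ν).length - 1, by have := List.length_pos_iff.mpr hμ; omega⟩ ^
              n ((e :: ν).getLast hμ) = z₀} =
      C u (n e * contractionNum n m ν) := by
  intro ν
  induction ν with
  | nil =>
    intro e z₀ hμ
    obtain ⟨u, hu⟩ := exists_root (n e) (hn e).ne' z₀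
    refine ⟨u, ?_⟩
    have hQ : n e * contractionNum n m ([] : List E) = n e := by
      rw [contractionNum]; exact Nat.mul_one _
    rw [hQ]
    ext w
    simp only [Set.mem_image, Set.mem_setOf_eq, C]
    constructor
    · rintro ⟨z, ⟨_, hlast⟩, rfl⟩
      have hl : z ⟨0, Nat.one_pos⟩ ^ n e = z₀ := hlast
      rw [mul_pow, inv_pow, hl, hu, inv_mul_cancel]
    · intro hw
      rw [mul_pow, inv_pow, hu, inv_mul_eq_one] at hw
      refine ⟨fun _ => w, ⟨?_, ?_⟩, rfl⟩
      · intro i h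
        simp at h
      · show w ^ n e = z₀
        exact hw.symm
  | cons f rest ih =>
    intro e z₀ hμ
    obtain ⟨u', hu'⟩ := ih f z₀ (List.cons_ne_nil f rest)
    have hQ'pos : n f * contractionNum n m rest ≠ 0 :=
      (Nat.mul_pos (hn f) (cpos n m hn rest)).ne'
    have hP : contractionNum n m (f :: rest)
        = if m f = 0 then 1
          else (n f * contractionNum n m rest) /
            Nat.gcd (n f * contractionNum n m rest) (m f).natAbs := by
      rw [contractionNum]
    obtain ⟨v, hv⟩ := exists_root (n e) (hn e).ne' (u' ^ m f)
    refine ⟨v, ?_⟩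
    have himg := image_pow_C u' (n f * contractionNum n m rest) hQ'pos (m f)
    rw [← hP] at himg
    have hpre := preimage_pow (n e) (contractionNum n m (f :: rest)) (u' ^ m f) v hv
    ext w
    rw [← hpre]
    constructor
    · rintro ⟨z, ⟨hcond, hlast⟩, rfl⟩
      show z ⟨0, _⟩ ^ n e ∈ C (u' ^ m f) (contractionNum n m (f :: rest))
      rw [← himg, ← hu']
      have h0 : z ⟨0, by simp⟩ ^ n e = z ⟨1, by simp⟩ ^ m f := by
        have := hcond 0 (by simp)
        exact this
      rw [h0]
      refine ⟨z ⟨1, by simp⟩, ⟨fun j => z (Fin.succ j), ⟨?_, ?_⟩, rfl⟩, rfl⟩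
      · intro i h
        have h' : (i + 1) + 1 < (e :: f :: rest).length := by
          simp only [List.length_cons] at h ⊢; omega
        exact hcond (i + 1) h'
      · have hl := hlast
        rw [List.getLast_cons (List.cons_ne_nil f rest)] at hl
        exact hl
    · intro hw
      have hw2 : w ^ n e ∈ C (u' ^ m f) (contractionNum n m (f :: rest)) := hw
      rw [← himg, ← hu'] at hw2
      obtain ⟨x, ⟨z', ⟨hcond', hlast'⟩, rfl⟩, hxw⟩ := hw2
      set znew : Fin (e :: f :: rest).length → Circle := fun j =>
        if h : (j : ℕ) = 0 then w else z' ⟨(j : ℕ) - 1, by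
          have := j.2; simp only [List.length_cons] at this ⊢; omega⟩ with hznew
      have hz0 : ∀ (hh : 0 < (e :: f :: rest).length), znew ⟨0, hh⟩ = w :=
        fun hh => dif_pos rfl
      have hzs : ∀ (i : ℕ) (hh : i + 1 < (e :: f :: rest).length),
          znew ⟨i + 1, hh⟩ = z' ⟨i, by simp only [List.length_cons] at hh ⊢; omega⟩ :=
        fun i hh => dif_neg (Nat.succ_ne_zero i)
      refine ⟨znew, ⟨?_, ?_⟩, hz0 _⟩
      · intro i h
        match i, h with
        | 0, h =>
          rw [hz0, hzs 0 h]
          exact hxw.symm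
        | Nat.succ i, h =>
          rw [hzs (i + 1) h, hzs i (by simp only [List.length_cons] at h ⊢; omega)]
          exact hcond' i (by simp only [List.length_cons] at h ⊢; omega)
      · simp only [List.length_cons, Nat.add_sub_cancel]
        rw [hzs rest.length (by simp), List.getLast_cons (List.cons_ne_nil f rest)]
        exact hlast'

end Stmt6Aux

/-- For a path `μ = (e₁, …, e_k)` in a directed graph with weights `n : E¹ → ℤ₊`,
`m : E¹ → ℤ`, consider `𝕋_μ = { z ∈ 𝕋^k : z_i^{n(e_i)} = z_{i+1}^{m(e_{i+1})} }` with
`d_μ(z) = z_k^{n(e_k)}` and `r_μ(z) = z_1^{m(e_1)}`. Then for every `z₀ ∈ 𝕋` there is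
`z_k ∈ 𝕋` with `r_μ(d_μ⁻¹(z₀)) = { z_k e^{2πij/p(μ)} : j = 0, …, p(μ)−1 }`. -/
theorem stmt6 {V E : Type*} (dom ran : E → V) (n : E → ℕ) (m : E → ℤ)
    (hn : ∀ e, 0 < n e)
    (μ : List E) (hμ : μ ≠ []) (hchain : μ.Chain' (fun e f => dom e = ran f))
    (z₀ : Circle) :
    ∃ zk : Circle,
      (fun z : Fin μ.length → Circle =>
          z ⟨0, List.length_pos_iff.mpr hμ⟩ ^ m (μ.head hμ)) ''
        {z : Fin μ.length → Circle |
          (∀ (i : ℕ) (h : i + 1 < μ.length),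
            z ⟨i, by omega⟩ ^ n (μ.get ⟨i, by omega⟩) =
              z ⟨i + 1, h⟩ ^ m (μ.get ⟨i + 1, h⟩)) ∧
          z ⟨μ.length - 1, by have := List.length_pos_iff.mpr hμ; omega⟩ ^ n (μ.getLast hμ) =
            z₀} =
      {w : Circle | ∃ j : ℕ, j < contractionNum n m μ ∧
        w = zk * Circle.exp (2 * π * j / contractionNum n m μ)} := by
  cases μ with
  | nil => exact absurd rfl hμ
  | cons e ν =>
    obtain ⟨u, hu⟩ := Stmt6Aux.key n m hn ν e z₀ hμ
    have hQpos : n e * contractionNum n m ν ≠ 0 :=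
      (Nat.mul_pos (hn e) (Stmt6Aux.cpos n m hn ν)).ne'
    have hPpos : contractionNum n m (e :: ν) ≠ 0 := (Stmt6Aux.cpos n m hn _).ne'
    have hc : contractionNum n m (e :: ν)
        = if m e = 0 then 1
          else (n e * contractionNum n m ν) /
            Nat.gcd (n e * contractionNum n m ν) (m e).natAbs := by
      rw [contractionNum]
    refine ⟨u ^ m e, ?_⟩
    rw [show (fun z : Fin (e :: ν).length → Circle =>
          z ⟨0, List.length_pos_iff.mpr hμ⟩ ^ m ((e :: ν).head hμ))
        = (fun x : Circle => x ^ m e) ∘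
            (fun z : Fin (e :: ν).length → Circle => z ⟨0, List.length_pos_iff.mpr hμ⟩)
        from rfl, Set.image_comp, hu,
      Stmt6Aux.image_pow_C u _ hQpos (m e), ← hc, Stmt6Aux.C_eq_exp _ _ hPpos]
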